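/- Let $F\colon [0,\infty)\to[0,\infty)$ be continuous with $F(0) \le F_0$, let $a, b \ge 0$ be constants and $j \in L^2_{loc}([0,\infty))$, and suppose for all $t \ge 0$: \[ F(t) \le F_0 \exp\Big( C\big(a + \int_0^t \|j(\tau)\|^2 F(\tau)\,d\tau \big)\Big) \] for some $C>0$. If $C F_0 e^{Ca} \int_0^t \|j(\tau)\|^2\,d\tau < 1$, then \[ F(t) \le \frac{F_0\, e^{Ca}}{1 - C F_0\,e^{Ca} \int_0^t \|j(\tau)\|^2\,d\tau}. \] -/

import Mathlib

open MeasureTheory Filter Topology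

/-- elementary convexity bound for the exponential -/
lemma exp_diff_le' (x y : ℝ) (h : x ≤ y) :
    Real.exp (-x) - Real.exp (-y) ≤ Real.exp (-x) * (y - x) := by
  have h1 : -(y - x) + 1 ≤ Real.exp (-(y - x)) := Real.add_one_le_exp _
  have h2 : Real.exp (-y) = Real.exp (-x) * Real.exp (-(y - x)) := by
    rw [← Real.exp_add]; ring_nf
  nlinarith [Real.exp_pos (-x), Real.exp_pos (-(y - x))]

/-- Partition/telescoping step for the nonlinear Grönwall argument. -/
lemma gronwall_aux (G K : ℝ → ℝ) (t y0 : ℝ) (ht : 0 ≤ t) (hy0 : 0 ≤ y0)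
    (hG0 : G 0 = 0) (hK0 : K 0 = 0)
    (hKmono : ∀ u v, 0 ≤ u → u ≤ v → v ≤ t → K u ≤ K v)
    (hstep : ∀ u v, 0 ≤ u → u ≤ v → v ≤ t →
      Real.exp (-(G u)) - Real.exp (-(G v)) ≤
        y0 * Real.exp (G v - G u) * (K v - K u))
    (hGcont : ContinuousOn G (Set.Icc 0 t)) :
    1 - Real.exp (-(G t)) ≤ y0 * K t := by
  have main : ∀ δ : ℝ, 0 < δ → 1 - Real.exp (-(G t)) ≤ y0 * Real.exp δ * K t := by
    intro δ hδ
    have hUC : UniformContinuousOn G (Set.Icc 0 t) :=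
      isCompact_Icc.uniformContinuousOn_of_continuous hGcont
    obtain ⟨ε, hε, hεG⟩ := Metric.uniformContinuousOn_iff.mp hUC δ hδ
    obtain ⟨m, hm⟩ := exists_nat_gt (t / ε)
    set n : ℕ := m + 1 with hn
    have hnpos : (0:ℝ) < n := by positivity
    have htn : t / n < ε := by
      have h1 : t / ε < n := lt_of_lt_of_le hm (by exact_mod_cast Nat.le_succ m)
      rw [div_lt_iff₀ hnpos]
      calc t = (t / ε) * ε := by field_simp
        _ < n * ε := mul_lt_mul_of_pos_right h1 hε
        _ = ε * n := by ring
    set s : ℕ → ℝ := fun i => (i : ℝ) * t / n with hs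
    have hs0 : s 0 = 0 := by simp [hs]
    have hsn : s n = t := by simp only [hs]; exact mul_div_cancel_left₀ t hnpos.ne'
    have hsmem : ∀ i : ℕ, i ≤ n → s i ∈ Set.Icc 0 t := by
      intro i hi
      refine ⟨div_nonneg (by positivity) hnpos.le, ?_⟩
      rw [div_le_iff₀ hnpos]
      have : (i:ℝ) ≤ n := by exact_mod_cast hi
      nlinarith
    have hsle : ∀ i : ℕ, s i ≤ s (i + 1) := by
      intro i
      simp only [hs]
      have h4 : (0:ℝ) ≤ t := ht
      gcongr
      exact_mod_cast Nat.le_succ i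
    have hdist : ∀ i : ℕ, s (i + 1) - s i = t / n := by
      intro i; simp only [hs]; push_cast; ring
    have htel : 1 - Real.exp (-(G t)) =
        ∑ i ∈ Finset.range n, (Real.exp (-(G (s i))) - Real.exp (-(G (s (i+1))))) := by
      rw [Finset.sum_range_sub' (fun i => Real.exp (-(G (s i))))]
      rw [hs0, hsn, hG0]
      simp
    have hKtel : ∑ i ∈ Finset.range n, (K (s (i+1)) - K (s i)) = K t := by
      rw [Finset.sum_range_sub (fun i => K (s i)), hs0, hsn, hK0, sub_zero]
    rw [htel]
    calc ∑ i ∈ Finset.range n, (Real.exp (-(G (s i))) - Real.exp (-(G (s (i+1)))))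
        ≤ ∑ i ∈ Finset.range n, y0 * Real.exp δ * (K (s (i+1)) - K (s i)) := by
          apply Finset.sum_le_sum
          intro i hi
          have hin : i < n := Finset.mem_range.mp hi
          have hmi := hsmem i hin.le
          have hmi1 := hsmem (i + 1) hin
          have h1 := hstep (s i) (s (i+1)) hmi.1 (hsle i) hmi1.2
          have hGd : G (s (i+1)) - G (s i) ≤ δ := by
            have hd : dist (s i) (s (i+1)) < ε := by
              have hnn : 0 ≤ s (i+1) - s i := by linarith [hsle i]
              rw [Real.dist_eq, abs_sub_comm, abs_of_nonneg hnn, hdist i]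
              exact htn
            have h2 := hεG (s i) hmi (s (i+1)) hmi1 hd
            rw [Real.dist_eq, abs_sub_comm] at h2
            calc G (s (i+1)) - G (s i) ≤ |G (s (i+1)) - G (s i)| := le_abs_self _
              _ ≤ δ := h2.le
          have hKd : 0 ≤ K (s (i+1)) - K (s i) := by
            linarith [hKmono (s i) (s (i+1)) hmi.1 (hsle i) hmi1.2]
          calc Real.exp (-(G (s i))) - Real.exp (-(G (s (i+1))))
              ≤ y0 * Real.exp (G (s (i+1)) - G (s i)) * (K (s (i+1)) - K (s i)) := h1
            _ ≤ y0 * Real.exp δ * (K (s (i+1)) - K (s i)) := by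
                have h3 := Real.exp_le_exp.mpr hGd
                exact mul_le_mul_of_nonneg_right
                  (mul_le_mul_of_nonneg_left h3 hy0) hKd
      _ = y0 * Real.exp δ * K t := by rw [← Finset.mul_sum, hKtel]
  have hlim : Filter.Tendsto (fun k : ℕ => y0 * Real.exp (1 / ((k:ℝ) + 1)) * K t)
      Filter.atTop (𝓝 (y0 * Real.exp 0 * K t)) := by
    apply Filter.Tendsto.mul_const
    apply Filter.Tendsto.const_mul
    exact (Real.continuous_exp.tendsto 0).comp tendsto_one_div_add_atTop_nhds_zero_nat
  rw [Real.exp_zero, mul_one] at hlim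
  refine ge_of_tendsto' hlim fun k => ?_
  exact main (1 / ((k:ℝ) + 1)) (by positivity)

/-- Combination of the exponential a priori bound with the nonlinear Grönwall
lemma (Section 4). -/
theorem stmt_16 (F j : ℝ → ℝ) (F₀ a C : ℝ)
    (hFcont : ContinuousOn F (Set.Ici 0))
    (hFnn : ∀ t, 0 ≤ t → 0 ≤ F t)
    (hF0 : F 0 ≤ F₀) (hF₀ : 0 ≤ F₀) (ha : 0 ≤ a) (hC : 0 < C)
    (hj : ∀ t, 0 ≤ t → IntervalIntegrable (fun τ => (j τ) ^ 2) volume 0 t)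
    (hjF : ∀ t, 0 ≤ t →
      IntervalIntegrable (fun τ => (j τ) ^ 2 * F τ) volume 0 t)
    (hyp : ∀ t, 0 ≤ t →
      F t ≤ F₀ * Real.exp (C * (a + ∫ τ in (0:ℝ)..t, (j τ) ^ 2 * F τ))) :
    ∀ t, 0 ≤ t →
      C * F₀ * Real.exp (C * a) * (∫ τ in (0:ℝ)..t, (j τ) ^ 2) < 1 →
      F t ≤ F₀ * Real.exp (C * a) /
        (1 - C * F₀ * Real.exp (C * a) * ∫ τ in (0:ℝ)..t, (j τ) ^ 2) := by
  intro t ht hlt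
  set y0 : ℝ := F₀ * Real.exp (C * a) with hy0def
  have hy0 : 0 ≤ y0 := mul_nonneg hF₀ (Real.exp_pos _).le
  set G : ℝ → ℝ := fun s => C * ∫ τ in (0:ℝ)..s, (j τ) ^ 2 * F τ with hGdef
  set K : ℝ → ℝ := fun s => C * ∫ τ in (0:ℝ)..s, (j τ) ^ 2 with hKdef
  have hyp' : ∀ s, 0 ≤ s → F s ≤ y0 * Real.exp (G s) := by
    intro s hs
    have h := hyp s hs
    rw [mul_add, Real.exp_add, ← mul_assoc] at h
    exact h
  have hP : ∀ u v : ℝ, 0 ≤ u → u ≤ v → v ≤ t →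
      IntervalIntegrable (fun τ => (j τ) ^ 2 * F τ) volume u v := by
    intro u v hu huv hv
    refine (hjF t ht).mono_set ?_
    rw [Set.uIcc_of_le huv, Set.uIcc_of_le ht]
    exact Set.Icc_subset_Icc hu hv
  have hQ : ∀ u v : ℝ, 0 ≤ u → u ≤ v → v ≤ t →
      IntervalIntegrable (fun τ => (j τ) ^ 2) volume u v := by
    intro u v hu huv hv
    refine (hj t ht).mono_set ?_
    rw [Set.uIcc_of_le huv, Set.uIcc_of_le ht]
    exact Set.Icc_subset_Icc hu hv
  have hGdiff : ∀ u v : ℝ, 0 ≤ u → u ≤ v → v ≤ t →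
      G v - G u = C * ∫ τ in u..v, (j τ) ^ 2 * F τ := by
    intro u v hu huv hv
    have h1 := intervalIntegral.integral_add_adjacent_intervals
      (hP 0 u le_rfl hu (huv.trans hv)) (hP u v hu huv hv)
    simp only [hGdef]
    rw [← h1]; ring
  have hKdiff : ∀ u v : ℝ, 0 ≤ u → u ≤ v → v ≤ t →
      K v - K u = C * ∫ τ in u..v, (j τ) ^ 2 := by
    intro u v hu huv hv
    have h1 := intervalIntegral.integral_add_adjacent_intervals
      (hQ 0 u le_rfl hu (huv.trans hv)) (hQ u v hu huv hv)
    simp only [hKdef]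
    rw [← h1]; ring
  have hGmono : ∀ u v : ℝ, 0 ≤ u → u ≤ v → v ≤ t → G u ≤ G v := by
    intro u v hu huv hv
    have h1 := hGdiff u v hu huv hv
    have h2 : 0 ≤ ∫ τ in u..v, (j τ) ^ 2 * F τ :=
      intervalIntegral.integral_nonneg huv
        (fun τ hτ => mul_nonneg (sq_nonneg _) (hFnn τ (hu.trans hτ.1)))
    nlinarith
  have hKmono : ∀ u v : ℝ, 0 ≤ u → u ≤ v → v ≤ t → K u ≤ K v := by
    intro u v hu huv hv
    have h1 := hKdiff u v hu huv hv
    have h2 : 0 ≤ ∫ τ in u..v, (j τ) ^ 2 :=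
      intervalIntegral.integral_nonneg huv (fun τ _ => sq_nonneg _)
    nlinarith
  have hGstep : ∀ u v : ℝ, 0 ≤ u → u ≤ v → v ≤ t →
      G v - G u ≤ y0 * Real.exp (G v) * (K v - K u) := by
    intro u v hu huv hv
    have hmono : (∫ τ in u..v, (j τ) ^ 2 * F τ) ≤
        ∫ τ in u..v, (j τ) ^ 2 * (y0 * Real.exp (G v)) := by
      refine intervalIntegral.integral_mono_on huv (hP u v hu huv hv)
        ((hQ u v hu huv hv).mul_const _) ?_
      intro τ hτ
      have hτ0 : 0 ≤ τ := hu.trans hτ.1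
      have h1 : F τ ≤ y0 * Real.exp (G τ) := hyp' τ hτ0
      have h2 : G τ ≤ G v := hGmono τ v hτ0 hτ.2 hv
      have h3 := Real.exp_le_exp.mpr h2
      have h4 : F τ ≤ y0 * Real.exp (G v) := by nlinarith [Real.exp_pos (G τ)]
      exact mul_le_mul_of_nonneg_left h4 (sq_nonneg _)
    rw [intervalIntegral.integral_mul_const] at hmono
    rw [hGdiff u v hu huv hv]
    have hk := hKdiff u v hu huv hv
    calc C * ∫ τ in u..v, (j τ) ^ 2 * F τ
        ≤ C * ((∫ τ in u..v, (j τ) ^ 2) * (y0 * Real.exp (G v))) := by nlinarith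
      _ = y0 * Real.exp (G v) * (K v - K u) := by rw [hk]; ring
  have hstep : ∀ u v : ℝ, 0 ≤ u → u ≤ v → v ≤ t →
      Real.exp (-(G u)) - Real.exp (-(G v)) ≤
        y0 * Real.exp (G v - G u) * (K v - K u) := by
    intro u v hu huv hv
    have h1 := exp_diff_le' (G u) (G v) (hGmono u v hu huv hv)
    have h2 := hGstep u v hu huv hv
    have h3 : Real.exp (-(G u)) * (G v - G u) ≤
        Real.exp (-(G u)) * (y0 * Real.exp (G v) * (K v - K u)) :=
      mul_le_mul_of_nonneg_left h2 (Real.exp_pos _).le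
    have h4 : Real.exp (-(G u)) * (y0 * Real.exp (G v) * (K v - K u)) =
        y0 * Real.exp (G v - G u) * (K v - K u) := by
      rw [show G v - G u = G v + -(G u) by ring, Real.exp_add]; ring
    linarith
  have hGcont : ContinuousOn G (Set.Icc 0 t) := by
    have h1 : ContinuousOn (fun s => ∫ τ in (0:ℝ)..s, (j τ) ^ 2 * F τ)
        (Set.uIcc 0 t) :=
      intervalIntegral.continuousOn_primitive_interval' (hjF t ht) Set.left_mem_uIcc
    rw [Set.uIcc_of_le ht] at h1
    exact continuousOn_const.mul h1
  have hG0 : G 0 = 0 := by simp [hGdef]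
  have hK0 : K 0 = 0 := by simp [hKdef]
  have key := gronwall_aux G K t y0 ht hy0 hG0 hK0 hKmono hstep hGcont
  have hEq : C * F₀ * Real.exp (C * a) * (∫ τ in (0:ℝ)..t, (j τ) ^ 2) = y0 * K t := by
    simp only [hy0def, hKdef]; ring
  rw [hEq] at hlt ⊢
  have hden : 0 < 1 - y0 * K t := by linarith
  have h5 : 1 - y0 * K t ≤ Real.exp (-(G t)) := by linarith
  rw [Real.exp_neg] at h5
  have h6 : Real.exp (G t) ≤ (1 - y0 * K t)⁻¹ := by
    rw [← inv_inv (Real.exp (G t))]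
    exact inv_anti₀ hden h5
  calc F t ≤ y0 * Real.exp (G t) := hyp' t ht
    _ ≤ y0 * (1 - y0 * K t)⁻¹ := mul_le_mul_of_nonneg_left h6 hy0
    _ = y0 / (1 - y0 * K t) := (div_eq_mul_inv _ _).symm
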